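/- Let 0 < ε ≤ 1/2, S > 0, k ≥ 1, and let D be an instance with item sizes in (0, S]. Let J be the sub-instance of items of size greater than ε·S and I the sub-instance of items of size at most ε·S. Suppose P is a k-times packing of J_k using L ≤ (1+ε)·OPT(J_k) bins. Extend P by greedily inserting the k copies of each small item of I one at a time, placing each copy in the first bin that has enough remaining capacity and does not contain another copy of the same item, and opening a new bin when no such bin exists. Then the resulting k-times packing of D_k uses at most (1 + 2ε)·OPT(D_k) + k bins. -/

import Mathlib

/-- One step of First-Fit insertion for `k`-times bin packing: insert (a copy of)
item `i` of size `d i` into the first bin that has enough remaining capacity and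
does not already contain another copy of item `i`; open a new bin otherwise. -/
noncomputable def ffInsertF {n : ℕ} (d : Fin n → ℝ) (S : ℝ) (i : Fin n) :
    List (Finset (Fin n)) → List (Finset (Fin n))
  | [] => [{i}]
  | b :: bs =>
      if (∑ j ∈ b, d j) + d i ≤ S ∧ i ∉ b then insert i b :: bs
      else b :: ffInsertF d S i bs

/-- `OPT` of the sub-instance of `d` consisting of the items in `P`, for `k`-times
bin packing with capacity `S`: bins only contain items of `P`, each bin has total
size at most `S`, and each item of `P` lies in exactly `k` bins. -/
noncomputable def kOPTOn {n : ℕ} (d : Fin n → ℝ) (S : ℝ) (k : ℕ)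
    (P : Finset (Fin n)) : ℕ :=
  sInf {q | ∃ B : Fin q → Finset (Fin n),
    (∀ j, B j ⊆ P) ∧ (∀ j, ∑ i ∈ B j, d i ≤ S) ∧
    (∀ i ∈ P, (Finset.univ.filter fun j => i ∈ B j).card = k)}

lemma ffInsert_countP {n : ℕ} (d : Fin n → ℝ) (S : ℝ) (i j : Fin n) :
    ∀ bs : List (Finset (Fin n)),
    ((ffInsertF d S i bs).countP fun b => decide (j ∈ b)) =
      (bs.countP fun b => decide (j ∈ b)) + if j = i then 1 else 0
  | [] => by
      by_cases h : j = i <;> simp [ffInsertF, h]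
  | b :: bs => by
      rw [ffInsertF]
      by_cases h : (∑ j ∈ b, d j) + d i ≤ S ∧ i ∉ b
      · rw [if_pos h]
        by_cases hji : j = i
        · subst hji
          rw [if_pos rfl]
          simp [List.countP_cons, h.2]
        · rw [if_neg hji]
          simp [List.countP_cons, Finset.mem_insert, hji]
      · rw [if_neg h]
        simp only [List.countP_cons, ffInsert_countP d S i j bs]
        omega

lemma ffInsert_feas {n : ℕ} (d : Fin n → ℝ) (S : ℝ) (i : Fin n) (hdi : d i ≤ S) :
    ∀ bs : List (Finset (Fin n)), (∀ b ∈ bs, ∑ j ∈ b, d j ≤ S) →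
      ∀ b ∈ ffInsertF d S i bs, ∑ j ∈ b, d j ≤ S
  | [] => by
      intro _ b hb
      simp only [ffInsertF, List.mem_singleton] at hb
      subst hb; simpa using hdi
  | b :: bs => by
      intro h c hc
      rw [ffInsertF] at hc
      by_cases hcond : (∑ j ∈ b, d j) + d i ≤ S ∧ i ∉ b
      · rw [if_pos hcond] at hc
        rcases List.mem_cons.1 hc with rfl | hc
        · rw [Finset.sum_insert hcond.2]
          linarith [hcond.1]
        · exact h _ (List.mem_cons_of_mem _ hc)
      · rw [if_neg hcond] at hc
        rcases List.mem_cons.1 hc with rfl | hc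
        · exact h _ List.mem_cons_self
        · exact ffInsert_feas d S i hdi bs (fun b hb => h b (List.mem_cons_of_mem _ hb)) c hc

lemma ffInsert_cases {n : ℕ} (d : Fin n → ℝ) (S ε : ℝ) (i : Fin n)
    (hdi : 0 < d i) (hsm : d i ≤ ε * S) :
    ∀ bs : List (Finset (Fin n)),
      ((ffInsertF d S i bs).length = bs.length ∧
        ((ffInsertF d S i bs).countP fun b => decide ((∑ j ∈ b, d j) ≤ S - ε * S)) ≤
          (bs.countP fun b => decide ((∑ j ∈ b, d j) ≤ S - ε * S))) ∨
      ((ffInsertF d S i bs).length = bs.length + 1 ∧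
        ((ffInsertF d S i bs).countP fun b => decide ((∑ j ∈ b, d j) ≤ S - ε * S)) ≤
          (bs.countP fun b => decide (i ∈ b)) + 1)
  | [] => by
      right
      refine ⟨by simp [ffInsertF], ?_⟩
      simp only [ffInsertF, List.countP_cons, List.countP_nil]
      split_ifs <;> simp
  | b :: bs => by
      rw [ffInsertF]
      by_cases h : (∑ j ∈ b, d j) + d i ≤ S ∧ i ∉ b
      · rw [if_pos h]
        left
        refine ⟨rfl, ?_⟩
        have hsum : (∑ j ∈ insert i b, d j) = d i + ∑ j ∈ b, d j := Finset.sum_insert h.2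
        simp only [List.countP_cons]
        have hle : (if (decide ((∑ j ∈ insert i b, d j) ≤ S - ε * S)) = true then 1 else 0) ≤
            (if (decide ((∑ j ∈ b, d j) ≤ S - ε * S)) = true then 1 else 0) := by
          split_ifs with h1 h2
          · rfl
          · exfalso
            have := of_decide_eq_true h1
            rw [hsum] at this
            exact h2 (decide_eq_true (by linarith))
          · exact Nat.zero_le _
          · rfl
        omega
      · rw [if_neg h]
        rcases ffInsert_cases d S ε i hdi hsm bs with ⟨hl, hc⟩ | ⟨hl, hc⟩
        · left
          refine ⟨by simp [hl], ?_⟩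
          simp only [List.countP_cons]
          omega
        · right
          refine ⟨by simp [hl], ?_⟩
          simp only [List.countP_cons]
          have hle : (if (decide ((∑ j ∈ b, d j) ≤ S - ε * S)) = true then 1 else 0) ≤
              (if (decide (i ∈ b)) = true then 1 else 0) := by
            split_ifs with h1 h2
            · rfl
            · exfalso
              have hb1 := of_decide_eq_true h1
              have hib : i ∉ b := fun hib => h2 (decide_eq_true hib)
              exact h ⟨by linarith, hib⟩
            · exact Nat.zero_le _
            · rfl
          omega

lemma fold_inv {n : ℕ} (d : Fin n → ℝ) (S ε : ℝ) (k L : ℕ)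
    (hdpos : ∀ i, 0 < d i) (hε1 : ε * S ≤ S) :
    ∀ (ord : List (Fin n)) (bs : List (Finset (Fin n))),
    (∀ i ∈ ord, d i ≤ ε * S) →
    (∀ i ∈ ord, (bs.countP fun b => decide (i ∈ b)) + ord.count i ≤ k) →
    (∀ b ∈ bs, ∑ j ∈ b, d j ≤ S) →
    (bs.length ≤ L ∨ (bs.countP fun b => decide ((∑ j ∈ b, d j) ≤ S - ε * S)) ≤ k) →
    (∀ b ∈ (ord.foldl (fun bs i => ffInsertF d S i bs) bs), ∑ j ∈ b, d j ≤ S) ∧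
    ((ord.foldl (fun bs i => ffInsertF d S i bs) bs).length ≤ L ∨
      ((ord.foldl (fun bs i => ffInsertF d S i bs) bs).countP
        fun b => decide ((∑ j ∈ b, d j) ≤ S - ε * S)) ≤ k) ∧
    (∀ j, ((ord.foldl (fun bs i => ffInsertF d S i bs) bs).countP fun b => decide (j ∈ b)) =
      (bs.countP fun b => decide (j ∈ b)) + ord.count j)
  | [] => by
      intro bs _ _ hfeas hdisj
      exact ⟨hfeas, hdisj, fun j => by simp⟩
  | i :: rest => by
      intro bs hsm hcnt hfeas hdisj
      have hdi : d i ≤ ε * S := hsm i List.mem_cons_self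
      have hdiS : d i ≤ S := le_trans hdi hε1
      have hfeas' := ffInsert_feas d S i hdiS bs hfeas
      have hcp : ∀ j, ((ffInsertF d S i bs).countP fun b => decide (j ∈ b)) =
          (bs.countP fun b => decide (j ∈ b)) + if j = i then 1 else 0 :=
        fun j => ffInsert_countP d S i j bs
      have hdisj' : (ffInsertF d S i bs).length ≤ L ∨
          ((ffInsertF d S i bs).countP fun b => decide ((∑ j ∈ b, d j) ≤ S - ε * S)) ≤ k := by
        rcases ffInsert_cases d S ε i (hdpos i) hdi bs with ⟨hl, hc⟩ | ⟨hl, hc⟩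
        · rcases hdisj with h | h
          · exact Or.inl (hl ▸ h)
          · exact Or.inr (le_trans hc h)
        · right
          have h1 := hcnt i List.mem_cons_self
          rw [List.count_cons_self] at h1
          omega
      have hcnt' : ∀ j ∈ rest, ((ffInsertF d S i bs).countP fun b => decide (j ∈ b)) + rest.count j ≤ k := by
        intro j hj
        have h1 := hcnt j (List.mem_cons_of_mem _ hj)
        rw [List.count_cons] at h1
        rw [hcp j]
        by_cases hij : i = j
        · subst hij
          simp only [beq_self_eq_true, if_true, if_pos rfl] at h1 ⊢
          omega
        · rw [if_neg (show ¬((i == j) = true) by simpa using hij)] at h1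
          rw [if_neg (fun h => hij h.symm)]
          omega
      have hsm' : ∀ j ∈ rest, d j ≤ ε * S := fun j hj => hsm j (List.mem_cons_of_mem _ hj)
      have IH := fold_inv d S ε k L hdpos hε1 rest (ffInsertF d S i bs) hsm' hcnt' hfeas' hdisj'
      refine ⟨by simpa using IH.1, by simpa using IH.2.1, ?_⟩
      intro j
      have h3 := IH.2.2 j
      simp only [List.foldl_cons]
      rw [h3, hcp j, List.count_cons]
      by_cases hij : i = j
      · subst hij
        simp only [beq_self_eq_true, if_true, if_pos rfl]
        omega
      · rw [if_neg (show ¬((i == j) = true) by simpa using hij),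
            if_neg (fun h => hij h.symm)]
        omega

lemma bins_total {n : ℕ} (d : Fin n → ℝ) :
    ∀ l : List (Finset (Fin n)),
      (l.map fun b => ∑ i ∈ b, d i).sum =
        ∑ i : Fin n, d i * ((l.countP fun b => decide (i ∈ b)) : ℝ)
  | [] => by simp
  | b :: l => by
      simp only [List.map_cons, List.sum_cons, List.countP_cons, bins_total d l]
      have : ∀ i : Fin n,
          d i * (((l.countP fun b' => decide (i ∈ b')) + if decide (i ∈ b) = true then 1 else 0 : ℕ) : ℝ)
          = d i * ((l.countP fun b' => decide (i ∈ b')) : ℝ) + (if i ∈ b then d i else 0) := by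
        intro i
        by_cases h : i ∈ b <;> simp [h] <;> push_cast <;> ring
      rw [Finset.sum_congr rfl fun i _ => this i, Finset.sum_add_distrib]
      rw [Finset.sum_ite_mem, Finset.univ_inter]
      ring

lemma count_lb (c : ℝ) (hc : 0 ≤ c) :
    ∀ l : List ℝ, (∀ x ∈ l, 0 ≤ x) →
      ((l.countP fun x => !decide (x ≤ c)) : ℝ) * c ≤ l.sum
  | [] => by simp
  | x :: l => by
      intro h
      have ih := count_lb c hc l (fun y hy => h y (List.mem_cons_of_mem _ hy))
      have hx := h x List.mem_cons_self
      simp only [List.countP_cons, List.sum_cons]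
      by_cases hxc : x ≤ c
      · simp only [decide_eq_true hxc, Bool.not_true, if_neg Bool.false_ne_true]
        push_cast
        linarith
      · simp only [decide_eq_false hxc, Bool.not_false, if_pos rfl]
        push_cast
        nlinarith

lemma kOPT_univ_nonempty {n : ℕ} (d : Fin n → ℝ) (S : ℝ) (k : ℕ)
    (hd : ∀ i, 0 < d i ∧ d i ≤ S) :
    {q | ∃ B : Fin q → Finset (Fin n),
      (∀ j, B j ⊆ Finset.univ) ∧ (∀ j, ∑ i ∈ B j, d i ≤ S) ∧
      (∀ i ∈ Finset.univ, (Finset.univ.filter fun j => i ∈ B j).card = k)}.Nonempty := by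
  refine ⟨n * k, fun m => {(finProdFinEquiv.symm m).1}, fun j => Finset.subset_univ _,
    fun j => by simpa using (hd _).2, ?_⟩
  intro i _
  have : (Finset.univ.filter fun m : Fin (n * k) =>
      i ∈ ({(finProdFinEquiv.symm m).1} : Finset (Fin n))).card =
      (Finset.univ : Finset (Fin k)).card := by
    refine Finset.card_nbij' (fun m => (finProdFinEquiv.symm m).2)
      (fun c => finProdFinEquiv (i, c)) (fun m _ => Finset.mem_univ _) ?_ ?_ ?_
    · intro c _
      have h2 : (finProdFinEquiv.symm (finProdFinEquiv (i, c))) = (i, c) :=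
        Equiv.symm_apply_apply _ _
      simp only [Finset.mem_coe, Finset.mem_filter]
      exact ⟨Finset.mem_univ _, by rw [h2]; exact Finset.mem_singleton_self i⟩
    · intro m hm
      simp only [Finset.mem_coe, Finset.mem_filter, Finset.mem_singleton] at hm
      have h1 : (finProdFinEquiv.symm m).1 = i := hm.2.symm
      calc finProdFinEquiv (i, (finProdFinEquiv.symm m).2)
          = finProdFinEquiv ((finProdFinEquiv.symm m).1, (finProdFinEquiv.symm m).2) := by
            rw [h1]
        _ = finProdFinEquiv (finProdFinEquiv.symm m) := by rw [Prod.mk.eta]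
        _ = m := Equiv.apply_symm_apply _ _
    · intro c _
      simp
  rw [this]
  simp

lemma kOPT_lb {n : ℕ} (d : Fin n → ℝ) (S : ℝ) (k : ℕ)
    (hd : ∀ i, 0 < d i ∧ d i ≤ S) :
    (k : ℝ) * ∑ i, d i ≤ (kOPTOn d S k Finset.univ : ℝ) * S := by
  have hmem := Nat.sInf_mem (kOPT_univ_nonempty d S k hd)
  obtain ⟨B, -, hsum, hcard⟩ := hmem
  set q := kOPTOn d S k Finset.univ with hq
  calc (k : ℝ) * ∑ i, d i = ∑ i, (k : ℝ) * d i := Finset.mul_sum _ _ _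
    _ = ∑ i : Fin n, ((Finset.univ.filter fun j => i ∈ B j).card : ℝ) * d i := by
        refine Finset.sum_congr rfl fun i _ => ?_
        rw [hcard i (Finset.mem_univ i)]
    _ = ∑ i : Fin n, ∑ j : Fin q, (if i ∈ B j then d i else 0) := by
        refine Finset.sum_congr rfl fun i _ => ?_
        rw [← Finset.sum_filter, Finset.sum_const, nsmul_eq_mul]
        rfl
    _ = ∑ j : Fin q, ∑ i : Fin n, (if i ∈ B j then d i else 0) := Finset.sum_comm
    _ = ∑ j : Fin q, ∑ i ∈ B j, d i := by
        refine Finset.sum_congr rfl fun j _ => ?_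
        rw [Finset.sum_ite_mem, Finset.univ_inter]
    _ ≤ ∑ _j : Fin q, S := Finset.sum_le_sum fun j _ => hsum j
    _ = (q : ℝ) * S := by rw [Finset.sum_const, Finset.card_univ, Fintype.card_fin, nsmul_eq_mul]

lemma kOPT_mono {n : ℕ} (d : Fin n → ℝ) (S : ℝ) (k : ℕ)
    (hd : ∀ i, 0 < d i ∧ d i ≤ S) (P : Finset (Fin n)) :
    kOPTOn d S k P ≤ kOPTOn d S k Finset.univ := by
  have hmem := Nat.sInf_mem (kOPT_univ_nonempty d S k hd)
  obtain ⟨B, -, hsum, hcard⟩ := hmem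
  refine Nat.sInf_le ⟨fun j => (B j) ∩ P, fun j => Finset.inter_subset_right, ?_, ?_⟩
  · intro j
    refine le_trans (Finset.sum_le_sum_of_subset_of_nonneg Finset.inter_subset_left ?_) (hsum j)
    exact fun i _ _ => (hd i).1.le
  · intro i hi
    show (Finset.filter (fun j => i ∈ B j ∩ P) Finset.univ).card = k
    have heq : Finset.filter (fun j => i ∈ B j ∩ P) Finset.univ =
        Finset.filter (fun j => i ∈ B j) Finset.univ := by
      apply Finset.filter_congr
      intro j _
      simp [hi]
    rw [heq]
    exact hcard i (Finset.mem_univ i)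

lemma countP_add_not {A : Type*} (p : A → Bool) : ∀ l : List A,
    l.countP p + l.countP (fun a => !p a) = l.length
  | [] => rfl
  | x :: l => by
      simp only [List.countP_cons, List.length_cons, ← countP_add_not p l]
      cases h : p x <;> simp [h] <;> omega

/-- Let `0 < ε ≤ 1/2`, `S > 0`, `k ≥ 1`, sizes in `(0,S]`; `J` the
large items (size `> ε·S`), `I` the small items (size `≤ ε·S`).  If `P` is a
`k`-times packing of `J_k` into `L ≤ (1+ε)·OPT(J_k)` bins, and the `k` copies of
each small item are added greedily one at a time (each copy into the first bin with
enough remaining capacity that does not contain another copy of the same item,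
opening a new bin only when needed), then the resulting `k`-times packing of `D_k`
uses at most `(1+2ε)·OPT(D_k) + k` bins. -/
theorem stmt_14 {n : ℕ} (d : Fin n → ℝ) (S ε : ℝ) (hS : 0 < S)
    (hε : 0 < ε ∧ ε ≤ 1/2) (hd : ∀ i, 0 < d i ∧ d i ≤ S) (k : ℕ) (hk : 1 ≤ k)
    (L : ℕ) (bins0 : List (Finset (Fin n))) (order : List (Fin n))
    (hlen : bins0.length = L)
    (hL : (L : ℝ) ≤ (1 + ε) *
      (kOPTOn d S k (Finset.univ.filter fun i => ε * S < d i) : ℝ))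
    (hfeas : ∀ b ∈ bins0, ∑ i ∈ b, d i ≤ S)
    (hlarge : ∀ i : Fin n, ε * S < d i →
      (bins0.countP fun b => decide (i ∈ b)) = k)
    (hsmall : ∀ i : Fin n, d i ≤ ε * S →
      (bins0.countP fun b => decide (i ∈ b)) = 0)
    (hordS : ∀ i : Fin n, d i ≤ ε * S → order.count i = k)
    (hordL : ∀ i : Fin n, ε * S < d i → order.count i = 0) :
    ((order.foldl (fun bs i => ffInsertF d S i bs) bins0).length : ℝ) ≤
      (1 + 2*ε) * (kOPTOn d S k Finset.univ : ℝ) + k := by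
  obtain ⟨hε0, hε2⟩ := hε
  have hdpos : ∀ i, 0 < d i := fun i => (hd i).1
  have hεS : ε * S ≤ S := by nlinarith
  have hsmOrd : ∀ i ∈ order, d i ≤ ε * S := by
    intro i hi
    by_contra h
    push_neg at h
    have h1 := hordL i h
    have h2 : 0 < order.count i := List.count_pos_iff.mpr hi
    omega
  have hcnt0 : ∀ i ∈ order,
      (bins0.countP fun b => decide (i ∈ b)) + order.count i ≤ k := by
    intro i hi
    have hsm := hsmOrd i hi
    rw [hsmall i hsm, hordS i hsm]
    omega
  obtain ⟨hfeasF, hdisjF, hcntF⟩ := fold_inv d S ε k L hdpos hεS order bins0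
    hsmOrd hcnt0 hfeas (Or.inl (le_of_eq hlen))
  set bf := order.foldl (fun bs i => ffInsertF d S i bs) bins0 with hbf
  have hcntk : ∀ j, (bf.countP fun b => decide (j ∈ b)) = k := by
    intro j
    rcases le_or_gt (d j) (ε * S) with h | h
    · rw [hcntF j, hsmall j h, hordS j h]
      omega
    · rw [hcntF j, hlarge j h, hordL j h]
      omega
  have hOPT0 : (0 : ℝ) ≤ (kOPTOn d S k Finset.univ : ℝ) := Nat.cast_nonneg _
  have hk0 : (0 : ℝ) ≤ (k : ℝ) := Nat.cast_nonneg _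
  have hmono : ((kOPTOn d S k (Finset.univ.filter fun i => ε * S < d i)) : ℝ) ≤
      (kOPTOn d S k Finset.univ : ℝ) :=
    Nat.cast_le.mpr (kOPT_mono d S k hd _)
  rcases hdisjF with hF | hF
  · have h1 : ((bf.length : ℕ) : ℝ) ≤ (L : ℝ) := Nat.cast_le.mpr hF
    have h2 : (1 + ε) * ((kOPTOn d S k (Finset.univ.filter fun i => ε * S < d i)) : ℝ) ≤
        (1 + ε) * (kOPTOn d S k Finset.univ : ℝ) :=
      mul_le_mul_of_nonneg_left hmono (by linarith)
    nlinarith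
  · set N := bf.countP (fun b => !(decide ((∑ j ∈ b, d j) ≤ S - ε * S))) with hN
    have hlen_eq : (bf.countP fun b => decide ((∑ j ∈ b, d j) ≤ S - ε * S)) + N =
        bf.length := countP_add_not _ bf
    have htot : ((bf.map fun b => ∑ i ∈ b, d i).sum) = (k : ℝ) * ∑ i, d i := by
      rw [bins_total d bf]
      rw [Finset.mul_sum]
      refine Finset.sum_congr rfl fun i _ => ?_
      rw [hcntk i]
      ring
    have hc1 : (0 : ℝ) ≤ S - ε * S := by nlinarith
    have hcl := count_lb (S - ε * S) hc1 (bf.map fun b => ∑ i ∈ b, d i)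
      (by
        intro x hx
        obtain ⟨b, _, rfl⟩ := List.mem_map.1 hx
        exact Finset.sum_nonneg fun i _ => (hdpos i).le)
    rw [List.countP_map, htot] at hcl
    have hclN : ((N : ℕ) : ℝ) * (S - ε * S) ≤ (k : ℝ) * ∑ i, d i := hcl
    have hopt := kOPT_lb d S k hd
    have hNS : ((N : ℕ) : ℝ) * (S - ε * S) ≤ (kOPTOn d S k Finset.univ : ℝ) * S :=
      le_trans hclN hopt
    have hN1 : ((N : ℕ) : ℝ) * (1 - ε) ≤ (kOPTOn d S k Finset.univ : ℝ) := by
      have h' : (((N : ℕ) : ℝ) * (1 - ε)) * S ≤ (kOPTOn d S k Finset.univ : ℝ) * S := by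
        nlinarith [hNS]
      exact le_of_mul_le_mul_right h' hS
    have hN0 : (0 : ℝ) ≤ ((N : ℕ) : ℝ) := Nat.cast_nonneg _
    have hNle : ((N : ℕ) : ℝ) ≤ (1 + 2 * ε) * (kOPTOn d S k Finset.univ : ℝ) := by
      nlinarith [mul_nonneg (mul_nonneg hN0 hε0.le) (by linarith : (0 : ℝ) ≤ 1 - 2 * ε)]
    have hFN : ((bf.length : ℕ) : ℝ) ≤ ((N : ℕ) : ℝ) + (k : ℝ) := by
      have : bf.length ≤ N + k := by omega
      exact_mod_cast this
    linarith
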